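/- Let n ≥ 2 and let U be the unitary on ℂⁿ ⊗ ℂⁿ defined by U(e_k ⊗ e_l) = u_{(k-1)n+l} · e_k ⊗ e_{l+1} for l < n, U(e_k ⊗ e_n) = u_{kn} · e_{k+1} ⊗ e_1 for k < n, and U(e_n ⊗ e_n) = u_{n²} · e_1 ⊗ e_1, where the u's are unimodular complex numbers. Then for 1 ≤ r < n, Φ_U(E_{rr}) = (1 − λ_n) E_{rr} + λ_n E_{(r+1)(r+1)}, where β = ∑_q λ_q E_{qq} and Φ_U(Q) = Tr₂(U(Q ⊗ β)U*). -/

import Mathlib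

open Matrix Kronecker

/-- Partial trace over the second tensor factor. -/
noncomputable def trace2 {n : ℕ} (T : Matrix (Fin n × Fin n) (Fin n × Fin n) ℂ) :
    Matrix (Fin n) (Fin n) ℂ :=
  Matrix.of fun i k => ∑ j, T (i, j) (k, j)

/-- Cyclic successor on the tensor index set (lexicographic order). -/
def nextIdx {n : ℕ} [NeZero n] (p : Fin n × Fin n) : Fin n × Fin n :=
  if h : (p.2 : ℕ) + 1 < n then (p.1, ⟨(p.2 : ℕ) + 1, h⟩) else (p.1 + 1, 0)

/-- The circulant unitary sending `e_k ⊗ e_l` to `u (k,l)` times the next basis vector. -/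
noncomputable def circU {n : ℕ} [NeZero n] (u : Fin n × Fin n → ℂ) :
    Matrix (Fin n × Fin n) (Fin n × Fin n) ℂ :=
  Matrix.of fun p q => if p = nextIdx q then u q else 0

section aux
variable {n : ℕ} [NeZero n]

def prevIdx (p : Fin n × Fin n) : Fin n × Fin n :=
  if h : 0 < (p.2 : ℕ) then (p.1, ⟨(p.2 : ℕ) - 1, by omega⟩)
  else (p.1 - 1, ⟨n - 1, by have := NeZero.pos n; omega⟩)

lemma nextIdx_prevIdx (p : Fin n × Fin n) : nextIdx (prevIdx p) = p := by
  obtain ⟨p1, p2⟩ := p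
  have h2 := p2.isLt
  have hn := NeZero.pos n
  unfold prevIdx
  by_cases h : 0 < (p2 : ℕ)
  · rw [dif_pos h]
    unfold nextIdx
    split_ifs with h'
    · exact Prod.ext (by rfl) (Fin.ext (by simp; omega))
    · exfalso; simp at h'; omega
  · rw [dif_neg h]
    unfold nextIdx
    split_ifs with h'
    · exfalso; simp at h'; omega
    · exact Prod.ext (sub_add_cancel p1 1) (Fin.ext (by simp; omega))

lemma prevIdx_nextIdx (p : Fin n × Fin n) : prevIdx (nextIdx p) = p := by
  obtain ⟨p1, p2⟩ := p
  have h2 := p2.isLt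
  have hn := NeZero.pos n
  unfold nextIdx
  by_cases h : (p2 : ℕ) + 1 < n
  · rw [dif_pos h]
    unfold prevIdx
    split_ifs with h'
    · exact Prod.ext (by rfl) (Fin.ext (by simp))
    · exfalso; simp at h'
  · rw [dif_neg h]
    unfold prevIdx
    split_ifs with h'
    · exfalso; simp at h'
    · exact Prod.ext (add_sub_cancel_right p1 1) (Fin.ext (by simp; omega))

lemma eq_nextIdx_iff (p q : Fin n × Fin n) : p = nextIdx q ↔ q = prevIdx p := by
  constructor
  · rintro rfl; rw [prevIdx_nextIdx]
  · rintro rfl; rw [nextIdx_prevIdx]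

lemma circU_apply (u : Fin n × Fin n → ℂ) (p q : Fin n × Fin n) :
    circU u p q = if q = prevIdx p then u q else 0 := by
  simp only [circU, Matrix.of_apply, eq_nextIdx_iff]

lemma entry_lemma (u : Fin n × Fin n → ℂ) (M : Matrix (Fin n × Fin n) (Fin n × Fin n) ℂ)
    (p q : Fin n × Fin n) :
    (circU u * M * (circU u)ᴴ) p q
      = u (prevIdx p) * M (prevIdx p) (prevIdx q) * star (u (prevIdx q)) := by
  rw [Matrix.mul_apply]
  simp only [Matrix.mul_apply, circU_apply, conjTranspose_apply, ite_mul, zero_mul,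
    Finset.sum_ite_eq', Finset.mem_univ, if_true, mul_ite, mul_zero, apply_ite (star : ℂ → ℂ), star_zero]

end aux

section aux2
variable {n : ℕ} [NeZero n]

lemma val_sub_one (hn : 2 ≤ n) (j : Fin n) :
    ((j - 1 : Fin n) : ℕ) = if j = 0 then n - 1 else (j : ℕ) - 1 := by
  have h2 := j.isLt
  rw [Fin.sub_def]
  have h1 : ((1 : Fin n) : ℕ) = 1 := by
    rw [Fin.val_one']; exact Nat.mod_eq_of_lt (by omega)
  split_ifs with h
  · subst h; simp only [h1, Fin.val_zero, add_zero]
    exact Nat.mod_eq_of_lt (by omega)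
  · have hj : 0 < (j : ℕ) := Nat.pos_of_ne_zero (fun h' => h (Fin.ext h'))
    simp only [h1]
    rw [show n - 1 + (j : ℕ) = n + ((j : ℕ) - 1) by omega, Nat.add_mod_left]
    exact Nat.mod_eq_of_lt (by omega)

lemma prevIdx_eq (hn : 2 ≤ n) (a j : Fin n) :
    prevIdx (a, j) = (if j = 0 then a - 1 else a, j - 1) := by
  unfold prevIdx
  by_cases h : j = 0
  · subst h
    rw [dif_neg (by simp)]
    refine Prod.ext rfl ?_
    exact Fin.ext (by rw [val_sub_one hn]; simp)
  · have hj : 0 < (j : ℕ) := Nat.pos_of_ne_zero (fun h' => h (Fin.ext h'))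
    rw [dif_pos hj]
    simp only [if_neg h, Prod.mk.injEq, true_and]
    exact Fin.ext (by rw [val_sub_one hn, if_neg h])

end aux2

lemma sum_erase_zero {n : ℕ} [NeZero n] (hn : 2 ≤ n) (l : Fin n → ℝ)
    (hsum : ∑ q, l q = 1) :
    ∑ j ∈ Finset.univ.erase (0 : Fin n), ((l (j - 1) : ℝ) : ℂ)
      = 1 - ((l ⟨n - 1, by omega⟩ : ℝ) : ℂ) := by
  have h01 : ((0 : Fin n) - 1) = (⟨n - 1, by omega⟩ : Fin n) :=
    Fin.ext (by rw [val_sub_one hn]; simp)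
  have step : ∑ j ∈ Finset.univ.erase (0 : Fin n), ((l (j - 1) : ℝ) : ℂ)
      = ∑ m ∈ Finset.univ.erase ((0 : Fin n) - 1), ((l m : ℝ) : ℂ) := by
    refine Finset.sum_nbij' (fun j => j - 1) (fun m => m + 1) ?_ ?_ ?_ ?_ ?_
    · intro a ha
      simp only [Finset.mem_erase, Finset.mem_univ, and_true] at ha ⊢
      exact fun h => ha (by rw [sub_left_inj] at h; exact h)
    · intro a ha
      simp only [Finset.mem_erase, Finset.mem_univ, and_true] at ha ⊢
      intro h; exact ha (by rw [← h, add_sub_cancel_right])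
    · intro a _; exact sub_add_cancel a 1
    · intro a _; exact add_sub_cancel_right a 1
    · intro a _; rfl
  rw [step, h01]
  have h2 := Finset.sum_erase_add Finset.univ (fun m => ((l m : ℝ) : ℂ))
    (Finset.mem_univ (⟨n - 1, by omega⟩ : Fin n))
  have h3 : ∑ m, ((l m : ℝ) : ℂ) = 1 := by
    rw [← Complex.ofReal_sum, hsum, Complex.ofReal_one]
  rw [h3] at h2
  linear_combination h2

theorem stmt11 (n : ℕ) [NeZero n] (hn : 2 ≤ n)
    (u : Fin n × Fin n → ℂ) (hu : ∀ p, ‖u p‖ = 1)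
    (l : Fin n → ℝ) (hl : ∀ q, 0 < l q) (hsum : ∑ q, l q = 1)
    (r : Fin n) (hr : (r : ℕ) + 1 < n) :
    trace2 (circU u * (Matrix.single r r 1 ⊗ₖ Matrix.diagonal fun q => (l q : ℂ))
        * (circU u)ᴴ)
      = (1 - (l ⟨n - 1, by omega⟩ : ℂ)) • Matrix.single r r 1
        + (l ⟨n - 1, by omega⟩ : ℂ) • Matrix.single (r + 1) (r + 1) 1 := by

  classical
  have hstd : ∀ (a b i k : Fin n), Matrix.single a b (1 : ℂ) i k
      = if a = i ∧ b = k then 1 else 0 := by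
    intros; simp [Matrix.single]
  ext i k
  simp only [trace2, Matrix.of_apply, entry_lemma, Matrix.add_apply, Matrix.smul_apply,
    smul_eq_mul, hstd, mul_ite, mul_one, mul_zero]
  have mid : ∀ (j x y : Fin n),
      u (x, j - 1) * (Matrix.single r r 1 ⊗ₖ Matrix.diagonal fun q => (l q : ℂ))
          (x, j - 1) (y, j - 1) * star (u (y, j - 1))
        = if r = x ∧ r = y then ((l (j - 1) : ℝ) : ℂ) else 0 := by
    intro j x y
    rw [Matrix.kroneckerMap_apply]
    simp only [Matrix.diagonal_apply_eq, hstd]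
    by_cases hc : r = x ∧ r = y
    · obtain ⟨h1, h2⟩ := hc
      subst h1; subst h2
      have h3 : u (r, j - 1) * star (u (r, j - 1)) = 1 := by
        rw [Complex.star_def, Complex.mul_conj]
        norm_cast
        rw [Complex.normSq_eq_norm_sq, hu, one_pow]
      rw [if_pos ⟨rfl, rfl⟩, if_pos ⟨rfl, rfl⟩, one_mul,
        mul_comm (u (r, j - 1)) (((l (j - 1) : ℝ)) : ℂ), mul_assoc, h3, mul_one]
    · rw [if_neg hc, if_neg hc]
      ring
  have key : ∀ j : Fin n,
      u (prevIdx (i, j)) *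
        (Matrix.single r r 1 ⊗ₖ Matrix.diagonal fun q => (l q : ℂ))
          (prevIdx (i, j)) (prevIdx (k, j)) * star (u (prevIdx (k, j)))
      = if j = 0 then (if r + 1 = i ∧ r + 1 = k then ((l (j - 1) : ℝ) : ℂ) else 0)
        else (if r = i ∧ r = k then ((l (j - 1) : ℝ) : ℂ) else 0) := by
    intro j
    rw [prevIdx_eq hn, prevIdx_eq hn]
    by_cases hj : j = 0
    · subst hj
      simp only [if_pos rfl, if_true, mid]
      simp only [eq_sub_iff_add_eq]
    · simp only [if_neg hj, mid]
  rw [Finset.sum_congr rfl (fun j _ => key j)]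
  rw [← Finset.add_sum_erase _ _ (Finset.mem_univ (0 : Fin n))]
  rw [if_pos rfl]
  rw [Finset.sum_congr rfl (fun j hj => if_neg (Finset.mem_erase.mp hj).1)]
  have pull : ∑ j ∈ Finset.univ.erase (0 : Fin n),
      (if r = i ∧ r = k then ((l (j - 1) : ℝ) : ℂ) else 0)
      = if r = i ∧ r = k then ∑ j ∈ Finset.univ.erase (0 : Fin n), ((l (j - 1) : ℝ) : ℂ)
        else 0 := by
    split_ifs <;> simp
  rw [pull, sum_erase_zero hn l hsum]
  have h01 : ((0 : Fin n) - 1) = (⟨n - 1, by omega⟩ : Fin n) :=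
    Fin.ext (by rw [val_sub_one hn]; simp)
  rw [h01]
  exact add_comm _ _
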